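/- Let P be the uniform distribution on [a,b] with a<b and let n ≥ 1. Among all sets of n points {c_1,...,c_n} ⊆ [a,b] with c_n = b fixed, the minimal distortion error equals (b-a)^2 / (3(2n-1)^2), attained by c_j = a + (2j-1)(b-a)/(2n-1) for 1 ≤ j ≤ n. -/

import Mathlib

open MeasureTheory intervalIntegral Finset Set

set_option maxHeartbeats 1000000

lemma myContInf {n : ℕ} (hn : 0 < n) (c : Fin n → ℝ) :
    Continuous fun t => ⨅ j : Fin n, (t - c j)^2 := by
  haveI : Nonempty (Fin n) := Fin.pos_iff_nonempty.mp hn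
  have heq : (fun t => ⨅ j : Fin n, (t - c j)^2)
      = fun t => Finset.univ.inf' Finset.univ_nonempty (fun j => (t - c j)^2) := by
    funext t; rw [Finset.inf'_univ_eq_ciInf]
  rw [heq]
  exact Continuous.finset_inf'_apply _ (fun i _ => by continuity)

lemma myIntSq (x y c : ℝ) : (∫ t in x..y, (t - c)^2) = ((y-c)^3 - (x-c)^3)/3 := by
  have h : ∀ t ∈ Set.uIcc x y, HasDerivAt (fun u => (u-c)^3/3) ((t - c)^2) t := by
    intro t _
    have h1 : HasDerivAt (fun u : ℝ => (u - c)^3/3) ((3:ℕ) * (t-c)^(3-1) * 1 / 3) t :=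
      (((hasDerivAt_id t).sub_const c).pow 3).div_const 3
    convert h1 using 1; push_cast; ring
  rw [intervalIntegral.integral_eq_sub_of_hasDerivAt h
    (Continuous.intervalIntegrable (by continuity) _ _)]
  ring

lemma myLower (a b : ℝ) (hab : a < b) (n : ℕ) (hn : 1 ≤ n) (c : Fin n → ℝ)
    (hmem : ∀ j, c j ∈ Set.Icc a b) (hb : c ⟨n - 1, Nat.sub_lt hn Nat.one_pos⟩ = b) :
    (b - a)^3 / (3 * (2 * (n : ℝ) - 1)^2) ≤ ∫ t in a..b, ⨅ j : Fin n, (t - c j)^2 := by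
  have hn0 : 0 < n := hn
  haveI : Nonempty (Fin n) := Fin.pos_iff_nonempty.mp hn0
  set f : ℝ → ℝ := fun t => ⨅ j : Fin n, (t - c j)^2 with hf
  have hfc : Continuous f := myContInf hn0 c
  have hfi : ∀ u v : ℝ, IntervalIntegrable f volume u v := fun u v =>
    hfc.intervalIntegrable u v
  have hsqi : ∀ (w u v : ℝ), IntervalIntegrable (fun t => (t - w)^2) volume u v :=
    fun w u v => (by continuity : Continuous fun t : ℝ => (t - w)^2).intervalIntegrable u v
  -- sorted tuple
  set x : Fin n → ℝ := c ∘ Tuple.sort c with hxdef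
  have hmono : Monotone x := Tuple.monotone_sort c
  have hrange : ∀ j, ∃ i, c j = x i := fun j =>
    ⟨(Tuple.sort c)⁻¹ j, by simp [hxdef]⟩
  have hxmem : ∀ i, x i ∈ Set.Icc a b := fun i => hmem _
  have hL : n - 1 < n := by omega
  have hxb : x ⟨n - 1, hL⟩ = b := by
    obtain ⟨i, hi⟩ := hrange ⟨n - 1, hL⟩
    have h1 : x i ≤ x ⟨n - 1, hL⟩ := hmono (by rw [Fin.le_def]; exact Nat.le_pred_of_lt i.2)
    have h2 : x ⟨n - 1, hL⟩ ≤ b := (hxmem _).2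
    rw [hb] at hi
    linarith [hi ▸ h1]
  have hinf_ge : ∀ (t w : ℝ), (∀ j, (t - w)^2 ≤ (t - c j)^2) → (t - w)^2 ≤ f t :=
    fun t w hw => le_ciInf hw
  set N : ℝ := 2 * (n : ℝ) - 1 with hNdef
  have hn1 : (1 : ℝ) ≤ (n : ℝ) := by exact_mod_cast hn
  have hN1 : 1 ≤ N := by rw [hNdef]; linarith
  have hN0 : 0 < N := by linarith
  set h : ℝ := (b - a) / N with hhdef
  have hh0 : 0 < h := div_pos (by linarith) hN0
  -- partition
  set y : ℕ → ℝ := fun k => if k = 0 then a else x ⟨min (k-1) (n-1), by omega⟩ with hydef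
  have hy0 : y 0 = a := by simp [hydef]
  have hyk : ∀ k (h1 : 1 ≤ k) (h2 : k ≤ n), y k = x ⟨k - 1, by omega⟩ := by
    intro k h1 h2
    simp only [hydef]
    rw [if_neg (by omega)]
    exact congrArg x (Fin.ext (show min (k-1) (n-1) = k - 1 by omega))
  have hyn : y n = b := by rw [hyk n hn le_rfl]; exact hxb
  have hsplit : (∫ t in a..b, f t) = ∑ k ∈ Finset.range n, ∫ t in (y k)..(y (k+1)), f t := by
    rw [intervalIntegral.sum_integral_adjacent_intervals (fun k _ => hfi _ _), hy0, hyn]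
  set LB : ℕ → ℝ := fun k => h^2 * (y (k+1) - y k) - (if k = 0 then (2:ℝ)/3 else 4/3) * h^3
    with hLBdef
  have hpiece : ∀ k ∈ Finset.range n, LB k ≤ ∫ t in (y k)..(y (k+1)), f t := by
    intro k hk
    rw [Finset.mem_range] at hk
    rcases Nat.eq_zero_or_pos k with rfl | hk1
    · -- first piece : from a to x 0
      set w : ℝ := x ⟨0, hn0⟩ with hw
      have hy1 : y 1 = w := hyk 1 le_rfl hn
      have haw : a ≤ w := (hxmem _).1
      have hle : y 0 ≤ y 1 := by rw [hy0, hy1]; exact haw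
      have hpt : ∀ t ∈ Set.Icc (y 0) (y 1), (fun t => (t - w)^2) t ≤ f t := by
        intro t ht
        apply hinf_ge
        intro j
        obtain ⟨i, hi⟩ := hrange j
        rw [hi]
        have h1 : w ≤ x i := hmono (by rw [Fin.le_def]; exact Nat.zero_le _)
        have ht2 := ht.2
        rw [hy1] at ht2
        nlinarith
      have hmon : (∫ t in (y 0)..(y 1), (t - w)^2) ≤ ∫ t in (y 0)..(y 1), f t :=
        intervalIntegral.integral_mono_on hle (hsqi _ _ _) (hfi _ _) hpt
      rw [myIntSq] at hmon
      refine le_trans ?_ hmon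
      have hgoal : LB 0 = h^2 * (w - a) - 2/3 * h^3 := by
        simp only [hLBdef]
        norm_num [hy0, hy1]
      have hval : ((y 1 - w)^3 - (y 0 - w)^3)/3 = (w - a)^3/3 := by
        rw [hy0, hy1]; ring
      rw [hgoal, hval]
      nlinarith [mul_nonneg (sq_nonneg (w - a - h)) (by linarith : (0:ℝ) ≤ w - a + 2*h)]
    · -- later pieces
      have hk1n : k - 1 < n := by omega
      have hkn : k < n := hk
      have hyu : y k = x ⟨k - 1, hk1n⟩ := hyk k hk1 (by omega)
      have hyv' : y (k+1) = x ⟨k + 1 - 1, by omega⟩ := hyk (k+1) (by omega) (by omega)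
      set u : ℝ := x ⟨k - 1, hk1n⟩ with hu
      set v : ℝ := x ⟨k, hkn⟩ with hv
      have hyv : y (k+1) = v := by
        rw [hyv', hv]; exact congrArg x (Fin.ext (show k + 1 - 1 = k by omega))
      have huv : u ≤ v := hmono (by rw [Fin.le_def]; exact Nat.sub_le k 1)
      set m : ℝ := (u + v)/2 with hm
      have hum : u ≤ m := by rw [hm]; linarith
      have hmv : m ≤ v := by rw [hm]; linarith
      have hcases : ∀ j, c j ≤ u ∨ v ≤ c j := by
        intro j
        obtain ⟨i, hi⟩ := hrange j
        rcases le_or_gt i.1 (k-1) with hik | hik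
        · left; rw [hi, hu]; exact hmono (by rw [Fin.le_def]; exact hik)
        · right; rw [hi, hv]; exact hmono (by rw [Fin.le_def]; exact (show k ≤ i.1 by omega))
      have hpt1 : ∀ t ∈ Set.Icc u m, (fun t => (t - u)^2) t ≤ f t := by
        intro t ht
        apply hinf_ge
        intro j
        rcases hcases j with hc | hc
        · nlinarith [ht.1, ht.2]
        · have h2t : u + v - 2*t ≥ 0 := by
            have := ht.2; rw [hm] at this; linarith
          nlinarith [ht.1, mul_nonneg (by linarith : (0:ℝ) ≤ c j - u)
            (by linarith : (0:ℝ) ≤ c j + u - 2*t)]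
      have hpt2 : ∀ t ∈ Set.Icc m v, (fun t => (t - v)^2) t ≤ f t := by
        intro t ht
        apply hinf_ge
        intro j
        rcases hcases j with hc | hc
        · have h2t : 2*t - u - v ≥ 0 := by
            have := ht.1; rw [hm] at this; linarith
          nlinarith [ht.2, mul_nonneg (by linarith : (0:ℝ) ≤ v - c j)
            (by linarith : (0:ℝ) ≤ 2*t - c j - v)]
        · nlinarith [ht.1, ht.2]
      have hmon1 : (∫ t in u..m, (t - u)^2) ≤ ∫ t in u..m, f t :=
        intervalIntegral.integral_mono_on hum (hsqi _ _ _) (hfi _ _) hpt1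
      have hmon2 : (∫ t in m..v, (t - v)^2) ≤ ∫ t in m..v, f t :=
        intervalIntegral.integral_mono_on hmv (hsqi _ _ _) (hfi _ _) hpt2
      rw [myIntSq] at hmon1 hmon2
      have hadd : (∫ t in u..m, f t) + (∫ t in m..v, f t) = ∫ t in u..v, f t :=
        intervalIntegral.integral_add_adjacent_intervals (hfi _ _) (hfi _ _)
      rw [hyu, hyv, ← hadd]
      refine le_trans ?_ (add_le_add hmon1 hmon2)
      have hgoal : LB k = h^2 * (v - u) - 4/3 * h^3 := by
        simp only [hLBdef]
        rw [if_neg (by omega : ¬ k = 0), hyu, hyv]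
      rw [hgoal, hm]
      nlinarith [mul_nonneg (sq_nonneg (v - u - 2*h)) (by linarith : (0:ℝ) ≤ v - u + 4*h)]
  -- sum up
  have hsum : ∑ k ∈ Finset.range n, LB k
      = h^2 * (b - a) - ((4:ℝ)/3 * n - 2/3) * h^3 := by
    simp only [hLBdef]
    rw [Finset.sum_sub_distrib, ← Finset.mul_sum, Finset.sum_range_sub (f := y), hy0, hyn,
      ← Finset.sum_mul]
    congr 2
    have hco : ∀ k, (if k = 0 then (2:ℝ)/3 else 4/3) = 4/3 - (if k = 0 then (2:ℝ)/3 else 0) := by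
      intro k; split <;> norm_num
    rw [Finset.sum_congr rfl (fun k _ => hco k), Finset.sum_sub_distrib,
      Finset.sum_const, Finset.sum_ite_eq' (Finset.range n) 0 (fun _ => (2:ℝ)/3)]
    simp only [Finset.mem_range, hn0, if_pos, Finset.card_range, nsmul_eq_mul]
    ring
  have hfinal : (b - a)^3 / (3 * N^2) = ∑ k ∈ Finset.range n, LB k := by
    rw [hsum, hhdef]
    have hne : N ≠ 0 := by linarith
    field_simp
    rw [hNdef]
    ring
  rw [hNdef] at hfinal
  rw [hsplit, hfinal]
  exact Finset.sum_le_sum hpiece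

lemma myCell {n : ℕ} (c : Fin n → ℝ) (a h t : ℝ) (hh0 : 0 < h) (k : ℕ) (hk : k < n)
    (hcj : ∀ j : Fin n, c j = a + (2 * (j : ℝ) + 1) * h)
    (ht1 : a + 2*(k:ℝ)*h ≤ t) (ht2 : t ≤ a + (2*(k:ℝ)+2)*h) :
    (⨅ j : Fin n, (t - c j)^2) = (t - c ⟨k, hk⟩)^2 := by
  haveI : Nonempty (Fin n) := Fin.pos_iff_nonempty.mp (by omega)
  have hck : c ⟨k, hk⟩ = a + (2*(k:ℝ)+1)*h := hcj ⟨k, hk⟩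
  apply le_antisymm
  · have hbdd : BddBelow (Set.range fun j : Fin n => (t - c j)^2) :=
      ⟨0, by rintro s ⟨j, rfl⟩; exact sq_nonneg _⟩
    exact ciInf_le hbdd ⟨k, hk⟩
  · apply le_ciInf
    intro j
    rcases lt_trichotomy j.1 k with hj | hj | hj
    · have hjr : (j.1:ℝ) + 1 ≤ (k:ℝ) := by exact_mod_cast hj
      rw [hck, hcj j]
      have e1 : h ≤ t - (a + (2*(j.1:ℝ)+1)*h) := by nlinarith
      have e2 : -(h) ≤ t - (a + (2*(k:ℝ)+1)*h) := by linarith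
      have e3 : t - (a + (2*(k:ℝ)+1)*h) ≤ h := by linarith
      nlinarith [mul_nonneg (by linarith : (0:ℝ) ≤ h - (t - (a + (2*(k:ℝ)+1)*h)))
          (by linarith : (0:ℝ) ≤ h + (t - (a + (2*(k:ℝ)+1)*h))),
        mul_nonneg (by linarith : (0:ℝ) ≤ (t - (a + (2*(j.1:ℝ)+1)*h)) - h)
          (by linarith : (0:ℝ) ≤ (t - (a + (2*(j.1:ℝ)+1)*h)) + h)]
    · have : (⟨k, hk⟩ : Fin n) = j := Fin.ext (by exact hj.symm)
      rw [this]
    · have hjr : (k:ℝ) + 1 ≤ (j.1:ℝ) := by exact_mod_cast hj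
      rw [hck, hcj j]
      have e1 : h ≤ (a + (2*(j.1:ℝ)+1)*h) - t := by nlinarith
      have e2 : -(h) ≤ t - (a + (2*(k:ℝ)+1)*h) := by linarith
      have e3 : t - (a + (2*(k:ℝ)+1)*h) ≤ h := by linarith
      nlinarith [mul_nonneg (by linarith : (0:ℝ) ≤ h - (t - (a + (2*(k:ℝ)+1)*h)))
          (by linarith : (0:ℝ) ≤ h + (t - (a + (2*(k:ℝ)+1)*h))),
        mul_nonneg (by linarith : (0:ℝ) ≤ ((a + (2*(j.1:ℝ)+1)*h) - t) - h)
          (by linarith : (0:ℝ) ≤ ((a + (2*(j.1:ℝ)+1)*h) - t) + h)]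

lemma myOpt (a b : ℝ) (hab : a < b) (n : ℕ) (hn : 1 ≤ n) :
    (∫ t in a..b, ⨅ j : Fin n, (t - (a + (2 * (j : ℝ) + 1) * (b - a) / (2 * (n : ℝ) - 1)))^2)
      = (b - a)^3 / (3 * (2 * (n : ℝ) - 1)^2) := by
  have hn0 : 0 < n := hn
  haveI : Nonempty (Fin n) := Fin.pos_iff_nonempty.mp hn0
  have hn1 : (1 : ℝ) ≤ (n : ℝ) := by exact_mod_cast hn
  set N : ℝ := 2 * (n : ℝ) - 1 with hNdef
  have hN1 : 1 ≤ N := by rw [hNdef]; linarith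
  have hN0 : 0 < N := by linarith
  have hNe : N ≠ 0 := by linarith
  set h : ℝ := (b - a) / N with hhdef
  have hh0 : 0 < h := div_pos (by linarith) hN0
  have hbeq : b = a + N * h := by rw [hhdef]; field_simp; ring
  set c : Fin n → ℝ := fun j => a + (2 * (j : ℝ) + 1) * (b - a) / N with hcdef
  have hcj : ∀ j : Fin n, c j = a + (2 * (j : ℝ) + 1) * h := by
    intro j; rw [hcdef, hhdef]; ring
  set f : ℝ → ℝ := fun t => ⨅ j : Fin n, (t - c j)^2 with hf
  have hfc : Continuous f := myContInf hn0 c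
  have hfi : ∀ u v : ℝ, IntervalIntegrable f volume u v := fun u v =>
    hfc.intervalIntegrable u v
  set z : ℕ → ℝ := fun k => if k < n then a + 2*(k:ℝ)*h else b with hzdef
  have hz0 : z 0 = a := by simp only [hzdef, if_pos hn0]; push_cast; ring
  have hzn : z n = b := by simp [hzdef]
  have hzk : ∀ k, k < n → z k = a + 2*(k:ℝ)*h := by
    intro k hk; simp only [hzdef, if_pos hk]
  have hzub : ∀ k, k < n → z (k+1) ≤ a + (2*(k:ℝ)+2)*h := by
    intro k hk
    by_cases hk1 : k + 1 < n
    · rw [hzk (k+1) hk1]; push_cast; linarith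
    · have : z (k+1) = b := by simp only [hzdef, if_neg hk1]
      rw [this, hbeq]
      have hkn : (k:ℝ) = (n:ℝ) - 1 := by
        have : k = n - 1 := by omega
        rw [this, Nat.cast_sub hn]; norm_num
      rw [hNdef, hkn]; nlinarith
  have hzlb : ∀ k, k < n → a + 2*(k:ℝ)*h + h ≤ z (k+1) := by
    intro k hk
    by_cases hk1 : k + 1 < n
    · rw [hzk (k+1) hk1]; push_cast; linarith
    · have : z (k+1) = b := by simp only [hzdef, if_neg hk1]
      rw [this, hbeq]
      have hkn : (k:ℝ) = (n:ℝ) - 1 := by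
        have : k = n - 1 := by omega
        rw [this, Nat.cast_sub hn]; norm_num
      rw [hNdef, hkn]; nlinarith
  have hzle : ∀ k, k < n → z k ≤ z (k+1) := by
    intro k hk
    rw [hzk k hk]; linarith [hzlb k hk]
  -- pointwise identity on each cell
  have hpw : ∀ k (hk : k < n), ∀ t ∈ Set.uIcc (z k) (z (k+1)),
      f t = (t - c ⟨k, hk⟩)^2 := by
    intro k hk t ht
    rw [Set.uIcc_of_le (hzle k hk)] at ht
    have ht1 : a + 2*(k:ℝ)*h ≤ t := by rw [hzk k hk] at ht; exact ht.1
    have ht2 : t ≤ a + (2*(k:ℝ)+2)*h := le_trans ht.2 (hzub k hk)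
    exact myCell c a h t hh0 k hk hcj ht1 ht2
  -- value of each piece
  have hval : ∀ k ∈ Finset.range n, (∫ t in (z k)..(z (k+1)), f t)
      = (if k = n - 1 then h^3/3 else 2*h^3/3) := by
    intro k hk
    rw [Finset.mem_range] at hk
    rw [intervalIntegral.integral_congr (fun t ht => hpw k hk t ht), myIntSq]
    have hzk' : z k - c ⟨k, hk⟩ = -h := by
      rw [hzk k hk, hcj ⟨k, hk⟩]; ring
    by_cases hk1 : k + 1 < n
    · rw [if_neg (by omega)]
      have : z (k+1) - c ⟨k, hk⟩ = h := by
        rw [hzk (k+1) hk1, hcj ⟨k, hk⟩]; push_cast; ring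
      rw [this, hzk']; ring
    · rw [if_pos (by omega)]
      have hkn : (k:ℝ) = (n:ℝ) - 1 := by
        have : k = n - 1 := by omega
        rw [this, Nat.cast_sub hn]; norm_num
      have : z (k+1) - c ⟨k, hk⟩ = 0 := by
        have hz : z (k+1) = b := by simp only [hzdef, if_neg hk1]
        rw [hz, hbeq, hcj ⟨k, hk⟩, hNdef, hkn]; ring
      rw [this, hzk']; ring
  -- assemble
  have hsplit : (∫ t in a..b, f t) = ∑ k ∈ Finset.range n, ∫ t in (z k)..(z (k+1)), f t := by
    rw [intervalIntegral.sum_integral_adjacent_intervals (fun k _ => hfi _ _), hz0, hzn]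
  rw [hsplit, Finset.sum_congr rfl hval]
  have hco : ∀ k, (if k = n-1 then h^3/3 else 2*h^3/3)
      = 2*h^3/3 - (if k = n-1 then h^3/3 else 0) := by
    intro k; split <;> ring
  rw [Finset.sum_congr rfl (fun k _ => hco k), Finset.sum_sub_distrib, Finset.sum_const,
    Finset.sum_ite_eq' (Finset.range n) (n-1) (fun _ => h^3/3)]
  rw [if_pos (by simp [Finset.mem_range]; omega)]
  simp only [Finset.card_range, nsmul_eq_mul]
  rw [hhdef]
  have hcast : ((n:ℝ)) * (2*((b-a)/N)^3/3) - ((b-a)/N)^3/3 = (b-a)^3/(3*N^2) := by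
    field_simp
    rw [hNdef]
    ring
  rw [hcast]

/-- Conditional quantization on `[a,b]` with the right endpoint `b` fixed:
the minimal distortion error over all `n`-point configurations containing `b`
is `(b-a)^2 / (3(2n-1)^2)`, attained by `c j = a + (2j+1)(b-a)/(2n-1)`, `j = 0,…,n-1`. -/
theorem stmt2 (a b : ℝ) (hab : a < b) (n : ℕ) (hn : 1 ≤ n) :
    IsLeast
      {V : ℝ | ∃ c : Fin n → ℝ, (∀ j, c j ∈ Set.Icc a b) ∧ c ⟨n - 1, by omega⟩ = b ∧
        V = (1 / (b - a)) * ∫ t in a..b, ⨅ j : Fin n, (t - c j)^2}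
      ((b - a)^2 / (3 * (2 * (n : ℝ) - 1)^2)) ∧
    (1 / (b - a)) * (∫ t in a..b,
        ⨅ j : Fin n, (t - (a + (2 * (j : ℝ) + 1) * (b - a) / (2 * (n : ℝ) - 1)))^2)
      = (b - a)^2 / (3 * (2 * (n : ℝ) - 1)^2) := by
  have hn1 : (1 : ℝ) ≤ (n : ℝ) := by exact_mod_cast hn
  have hN0 : (0:ℝ) < 2 * (n : ℝ) - 1 := by linarith
  have hNe : (2 * (n : ℝ) - 1) ≠ 0 := ne_of_gt hN0
  have hba : (0:ℝ) < b - a := by linarith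
  have hopt := myOpt a b hab n hn
  have heq2 : (1 / (b - a)) * (∫ t in a..b,
        ⨅ j : Fin n, (t - (a + (2 * (j : ℝ) + 1) * (b - a) / (2 * (n : ℝ) - 1)))^2)
      = (b - a)^2 / (3 * (2 * (n : ℝ) - 1)^2) := by
    rw [hopt]
    field_simp
  refine ⟨⟨?_, ?_⟩, heq2⟩
  · refine ⟨fun j => a + (2 * (j : ℝ) + 1) * (b - a) / (2 * (n : ℝ) - 1), ?_, ?_, heq2.symm⟩
    · intro j
      have hj0 : (0:ℝ) ≤ (j:ℝ) := Nat.cast_nonneg _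
      have hj1 : (j:ℝ) + 1 ≤ (n:ℝ) := by exact_mod_cast j.2
      constructor
      · have : 0 ≤ (2 * (j : ℝ) + 1) * (b - a) / (2 * (n : ℝ) - 1) := by positivity
        linarith
      · have : (2 * (j : ℝ) + 1) * (b - a) / (2 * (n : ℝ) - 1) ≤ b - a := by
          rw [div_le_iff₀ hN0]
          nlinarith
        linarith
    · have hcast : ((⟨n - 1, by omega⟩ : Fin n) : ℝ) = (n:ℝ) - 1 := by
        show ((n - 1 : ℕ) : ℝ) = (n:ℝ) - 1
        rw [Nat.cast_sub hn]; norm_num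
      show a + (2 * ((⟨n - 1, by omega⟩ : Fin n) : ℝ) + 1) * (b - a) / (2 * (n : ℝ) - 1) = b
      rw [hcast]
      field_simp
      ring
  · rintro V ⟨c, hmem, hb, rfl⟩
    have hl := myLower a b hab n hn c hmem hb
    have hkey : (b - a)^2 / (3 * (2 * (n : ℝ) - 1)^2)
        = (1 / (b - a)) * ((b - a)^3 / (3 * (2 * (n : ℝ) - 1)^2)) := by
      field_simp
    rw [hkey]
    exact mul_le_mul_of_nonneg_left hl (by positivity)
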